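/- Let 1/6 ≤ ε ≤ 1/2. For all real numbers w, z, x, y with w ≥ z ≥ x ≥ y ≥ 0, w + z + x + y = 1, and w + z = 1/2 + ε, the Shannon entropy satisfies H(w,z,x,y) ≥ min(H₂(ε), H₃(ε)), where H₂(ε) = −(1/4 + 3ε/2)·log₂(1/4 + 3ε/2) − 3(1/4 − ε/2)·log₂(1/4 − ε/2) and H₃(ε) = −2ε·log₂(2ε) − 2(1/2 − ε)·log₂(1/2 − ε). Moreover H₂(ε) is attained by the admissible distribution (1/4+3ε/2, 1/4−ε/2, 1/4−ε/2, 1/4−ε/2) and H₃(ε) by the admissible distribution (2ε, 1/2−ε, 1/2−ε, 0), so the minimum entropy equals min(H₂(ε), H₃(ε)). -/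
import Mathlib

noncomputable section

/-- `−p·log₂ p`, one term of the Shannon entropy (equals `0` at `p = 0`). -/
def nmlb (p : ℝ) : ℝ := -(p * Real.logb 2 p)

/-- The Shannon entropy (in bits) of the probability vector `(w, z, x, y)`. -/
def Hent (w z x y : ℝ) : ℝ := nmlb w + nmlb z + nmlb x + nmlb y

/-- The entropy of the distribution `(1/4+3ε/2, 1/4−ε/2, 1/4−ε/2, 1/4−ε/2)`. -/
def H2 (ε : ℝ) : ℝ :=
  -((1/4 + 3*ε/2) * Real.logb 2 (1/4 + 3*ε/2))
    - 3 * ((1/4 - ε/2) * Real.logb 2 (1/4 - ε/2))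

/-- The entropy of the distribution `(2ε, 1/2−ε, 1/2−ε, 0)`. -/
def H3 (ε : ℝ) : ℝ :=
  -(2*ε * Real.logb 2 (2*ε)) - 2 * ((1/2 - ε) * Real.logb 2 (1/2 - ε))

lemma nmlb_concave : ConcaveOn ℝ (Set.Ici (0:ℝ)) nmlb := by
  have h2 : nmlb = (Real.log 2)⁻¹ • Real.negMulLog := by
    funext p
    simp only [nmlb, Real.negMulLog, Real.logb, Pi.smul_apply, smul_eq_mul]
    ring
  rw [h2]
  exact Real.concaveOn_negMulLog.smul (by positivity)

lemma nmlb_combo {p q l : ℝ} (hp : 0 ≤ p) (hq : 0 ≤ q) (hl0 : 0 ≤ l) (hl1 : l ≤ 1) :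
    l * nmlb p + (1 - l) * nmlb q ≤ nmlb (l * p + (1 - l) * q) := by
  have h : l • nmlb p + (1 - l) • nmlb q ≤ nmlb (l • p + (1 - l) • q) :=
    nmlb_concave.2 (Set.mem_Ici.2 hp) (Set.mem_Ici.2 hq) hl0 (by linarith) (by ring)
  simpa [smul_eq_mul] using h

lemma nmlb_nonneg {p : ℝ} (h0 : 0 ≤ p) (h1 : p ≤ 1) : 0 ≤ nmlb p := by
  have hlb : Real.logb 2 p ≤ 0 := Real.logb_nonpos (by norm_num) h0 h1
  have := mul_nonpos_of_nonneg_of_nonpos h0 hlb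
  simp only [nmlb]; linarith

lemma nmlb_zero : nmlb 0 = 0 := by simp [nmlb]

lemma spread {t a b : ℝ} (htb : 0 ≤ t - b) (h1 : t/2 ≤ a) (h2 : a ≤ b) :
    nmlb b + nmlb (t - b) ≤ nmlb a + nmlb (t - a) := by
  rcases eq_or_lt_of_le (le_trans h1 h2) with hb | hb
  · have ha : a = b := le_antisymm h2 (hb ▸ h1)
    rw [ha]
  · -- t/2 < b
    obtain ⟨l, hl⟩ : ∃ l : ℝ, l = (a - (t - b)) / (2*b - t) := ⟨_, rfl⟩
    have hd : 0 < 2*b - t := by linarith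
    have hdne : 2*b - t ≠ 0 := ne_of_gt hd
    have hmul : l * (2*b - t) = a - (t - b) := by
      rw [hl]; exact div_mul_cancel₀ _ hdne
    have hl0 : 0 ≤ l := by rw [hl]; exact div_nonneg (by linarith) (by linarith)
    have hl1 : l ≤ 1 := by rw [hl, div_le_one hd]; linarith
    have hbpos : 0 ≤ b := by linarith
    have e1 : l * b + (1 - l) * (t - b) = a := by linear_combination hmul
    have e2 : l * (t - b) + (1 - l) * b = t - a := by linear_combination -hmul
    have c1 := nmlb_combo hbpos htb hl0 hl1
    have c2 := nmlb_combo htb hbpos hl0 hl1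
    rw [e1] at c1
    rw [e2] at c2
    linarith

set_option maxHeartbeats 1600000 in
theorem optimal_entropy_large_eps (ε : ℝ) (hε0 : 1/6 ≤ ε) (hε1 : ε ≤ 1/2) :
    (∀ w z x y : ℝ, w ≥ z → z ≥ x → x ≥ y → y ≥ 0 → w + z + x + y = 1 →
      w + z = 1/2 + ε → min (H2 ε) (H3 ε) ≤ Hent w z x y)
    ∧ ((1/4 + 3*ε/2 : ℝ) ≥ 1/4 - ε/2 ∧ (1/4 - ε/2 : ℝ) ≥ 1/4 - ε/2
        ∧ (1/4 - ε/2 : ℝ) ≥ 1/4 - ε/2 ∧ (1/4 - ε/2 : ℝ) ≥ 0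
        ∧ (1/4 + 3*ε/2) + (1/4 - ε/2) + (1/4 - ε/2) + (1/4 - ε/2) = (1 : ℝ)
        ∧ (1/4 + 3*ε/2) + (1/4 - ε/2) = (1/2 : ℝ) + ε
        ∧ Hent (1/4 + 3*ε/2) (1/4 - ε/2) (1/4 - ε/2) (1/4 - ε/2) = H2 ε)
    ∧ ((2*ε : ℝ) ≥ 1/2 - ε ∧ (1/2 - ε : ℝ) ≥ 1/2 - ε
        ∧ (1/2 - ε : ℝ) ≥ 0 ∧ (0 : ℝ) ≥ 0
        ∧ 2*ε + (1/2 - ε) + (1/2 - ε) + 0 = (1 : ℝ)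
        ∧ 2*ε + (1/2 - ε) = (1/2 : ℝ) + ε
        ∧ Hent (2*ε) (1/2 - ε) (1/2 - ε) 0 = H3 ε) := by
  have hH2 : H2 ε = nmlb (1/4 + 3*ε/2) + 3 * nmlb (1/4 - ε/2) := by
    simp only [H2, nmlb]; ring
  have hH3 : H3 ε = nmlb (2*ε) + 2 * nmlb (1/2 - ε) := by
    simp only [H3, nmlb]; ring
  refine ⟨?_, ?_, ?_⟩
  · intro w z x y hwz hzx hxy hy0 hsum hwzs
    have hx0 : 0 ≤ x := le_trans hy0 hxy
    -- Step A : spread (w,z) to (1/2+ε-x, x)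
    have hA : nmlb (1/2 + ε - x) + nmlb x ≤ nmlb w + nmlb z := by
      have := spread (t := 1/2 + ε) (a := w) (b := 1/2 + ε - x)
        (by simpa using hx0) (by linarith) (by linarith)
      have hzz : (1/2 + ε) - w = z := by linarith
      have hxx : (1/2 + ε) - (1/2 + ε - x) = x := by ring
      rw [hzz, hxx] at this
      exact this
    rcases eq_or_lt_of_le (by linarith : (0:ℝ) ≤ 1/2 - ε) with hu0 | hu0
    · -- ε = 1/2 : x = y = 0
      have hε : ε = 1/2 := by linarith
      have hx : x = 0 := by linarith
      have hy : y = 0 := by linarith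
      have h3z : H3 ε = 0 := by
        rw [hH3, hε]
        norm_num [nmlb_zero]
        simp [nmlb]
      have hz0 : 0 ≤ z := le_trans hx0 hzx
      have hw0 : 0 ≤ z := hz0
      have hnw := nmlb_nonneg (le_trans hz0 hwz) (by linarith : w ≤ 1)
      have hnz := nmlb_nonneg hz0 (by linarith : z ≤ 1)
      calc min (H2 ε) (H3 ε) ≤ H3 ε := min_le_right _ _
        _ ≤ Hent w z x y := by
            simp only [Hent]
            rw [h3z, hx, hy, nmlb_zero]; linarith
    · -- 1/2 - ε > 0
      obtain ⟨l, hl⟩ : ∃ l : ℝ, l = 2*((1/2 - ε) - x)/(1/2 - ε) := ⟨_, rfl⟩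
      have hxy2 : x + y = 1/2 - ε := by linarith
      have hune : (1/2 - ε : ℝ) ≠ 0 := ne_of_gt hu0
      have hmul : l * (1/2 - ε) = 2*((1/2 - ε) - x) := by
        rw [hl]; exact div_mul_cancel₀ _ hune
      have hxu : x ≤ 1/2 - ε := by linarith
      have h2xu : 1/2 - ε ≤ 2*x := by linarith
      have hl0 : 0 ≤ l := by rw [hl]; exact div_nonneg (by linarith) (by linarith)
      have hl1 : l ≤ 1 := by rw [hl, div_le_one hu0]; linarith
      have e1 : l * (1/4 + 3*ε/2) + (1 - l) * (2*ε) = 1/2 + ε - x := by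
        linear_combination (1/2) * hmul
      have e2 : l * (1/4 - ε/2) + (1 - l) * (1/2 - ε) = x := by
        linear_combination (-1/2) * hmul
      have e3 : l * (1/4 - ε/2) + (1 - l) * 0 = y := by
        linear_combination (1/2) * hmul - hxy2
      have c1 := nmlb_combo (p := 1/4 + 3*ε/2) (q := 2*ε) (by linarith) (by linarith) hl0 hl1
      have c2 := nmlb_combo (p := 1/4 - ε/2) (q := 1/2 - ε) (by linarith) (by linarith) hl0 hl1
      have c3 := nmlb_combo (p := 1/4 - ε/2) (q := 0) (by linarith) le_rfl hl0 hl1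
      rw [e1] at c1
      rw [e2] at c2
      rw [e3, nmlb_zero] at c3
      have key : l * H2 ε + (1 - l) * H3 ε ≤ Hent w z x y := by
        simp only [Hent]
        rw [hH2, hH3]
        have sum : l * (nmlb (1/4 + 3*ε/2) + 3 * nmlb (1/4 - ε/2))
            + (1 - l) * (nmlb (2*ε) + 2 * nmlb (1/2 - ε))
            = (l * nmlb (1/4 + 3*ε/2) + (1 - l) * nmlb (2*ε))
              + (l * nmlb (1/4 - ε/2) + (1 - l) * nmlb (1/2 - ε))
              + (l * nmlb (1/4 - ε/2) + (1 - l) * nmlb (1/2 - ε))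
              + (l * nmlb (1/4 - ε/2) + (1 - l) * 0) := by ring
        linarith [c1, c2, c3, hA, sum]
      have m1 : l * min (H2 ε) (H3 ε) ≤ l * H2 ε :=
        mul_le_mul_of_nonneg_left (min_le_left _ _) hl0
      have m2 : (1 - l) * min (H2 ε) (H3 ε) ≤ (1 - l) * H3 ε :=
        mul_le_mul_of_nonneg_left (min_le_right _ _) (by linarith)
      have msum : min (H2 ε) (H3 ε)
          = l * min (H2 ε) (H3 ε) + (1 - l) * min (H2 ε) (H3 ε) := by ring
      linarith [key, m1, m2, msum]
  · refine ⟨by linarith, le_refl _, le_refl _, by linarith, by ring, by ring, ?_⟩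
    simp only [Hent, nmlb, H2]; ring
  · refine ⟨by linarith, le_refl _, by linarith, le_refl _, by ring, by ring, ?_⟩
    simp only [Hent, nmlb, H3]; ring

end
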